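/- Let (ν, P, P̃, U) ∈ K_d, let θ̃ be a nonzero complex number, R = θ̃ P̃ Uᵗ, and set φ̃_0 = R e_{0,0} R^{-1} − (1/(d+1)) I_{d+1}. Then for all 0 ≤ i ≠ j ≤ d one has the matrix identity e_{i,j} = ( [φ_j, [φ_i, [φ_j, φ̃_0]]] − [φ_i, [φ_j, φ̃_0]] ) / (2 p̃_i), where [α, β] = αβ − βα. -/

import Mathlib

open Matrix Finset

lemma aux_sandwich {n : ℕ} (A B : Matrix (Fin n) (Fin n) ℂ) (k l : Fin n) :
    A * Matrix.single k l 1 * B = Matrix.of (fun a b => A a k * B l b) := by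
  ext a b
  simp [Matrix.mul_apply, Matrix.single, ite_and, Finset.mul_sum, Finset.sum_mul]

lemma aux_std_sandwich {n : ℕ} (M : Matrix (Fin n) (Fin n) ℂ) (i j : Fin n) :
    Matrix.single i i 1 * M * Matrix.single j j 1
      = M i j • Matrix.single i j 1 := by
  ext a b
  simp [Matrix.mul_apply, Matrix.single, ite_and]
  aesop

theorem stmt_6 (d : ℕ) (hd : 1 ≤ d) (ν : ℂ) (hν : ν ≠ 0)
    (p pt : Fin (d+1) → ℂ) (U : Matrix (Fin (d+1)) (Fin (d+1)) ℂ)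
    (hp0 : p 0 = 1/ν) (hpt0 : pt 0 = 1/ν)
    (hU : ∀ j, U 0 j = 1 ∧ U j 0 = 1)
    (hK : ν • (Matrix.diagonal p * U * Matrix.diagonal pt * U.transpose) = 1)
    (θt : ℂ) (hθt : θt ≠ 0) (R : Matrix (Fin (d+1)) (Fin (d+1)) ℂ)
    (hR : R = θt • (Matrix.diagonal pt * U.transpose))
    (e : Fin (d+1) → Fin (d+1) → Matrix (Fin (d+1)) (Fin (d+1)) ℂ)
    (he : ∀ i j, e i j = Matrix.single i j 1)
    (φ : Fin (d+1) → Matrix (Fin (d+1)) (Fin (d+1)) ℂ)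
    (hφ : ∀ i, φ i = e i i - (((d : ℂ) + 1)⁻¹) • 1)
    (φt0 : Matrix (Fin (d+1)) (Fin (d+1)) ℂ)
    (hφt0 : φt0 = R * e 0 0 * R⁻¹ - (((d : ℂ) + 1)⁻¹) • 1)
    (br : Matrix (Fin (d+1)) (Fin (d+1)) ℂ → Matrix (Fin (d+1)) (Fin (d+1)) ℂ →
      Matrix (Fin (d+1)) (Fin (d+1)) ℂ)
    (hbr : ∀ α β, br α β = α * β - β * α) :
    ∀ i j : Fin (d+1), i ≠ j →
      e i j = (2 * pt i)⁻¹ •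
        (br (φ j) (br (φ i) (br (φ j) φt0)) - br (φ i) (br (φ j) φt0)) := by
  intro i j hij
  -- pt entries are nonzero
  have hdet : (Matrix.diagonal pt).det ≠ 0 := by
    intro h
    have h1 := congrArg Matrix.det hK
    rw [Matrix.det_smul, Matrix.det_one, Matrix.det_mul, Matrix.det_mul, Matrix.det_mul, h,
      mul_zero, zero_mul, mul_zero] at h1
    exact one_ne_zero h1.symm
  have hptne : ∀ k, pt k ≠ 0 := by
    intro k hk
    exact hdet (by rw [Matrix.det_diagonal]; exact Finset.prod_eq_zero (Finset.mem_univ k) hk)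
  -- rearrange hK
  have hK1 : (ν • (Matrix.diagonal p * U)) * (Matrix.diagonal pt * U.transpose) = 1 := by
    rw [smul_mul_assoc, ← mul_assoc]; exact hK
  have hK2 : (Matrix.diagonal pt * U.transpose) * (ν • (Matrix.diagonal p * U)) = 1 :=
    mul_eq_one_comm.mp hK1
  have hRinv : R⁻¹ = (θt⁻¹ * ν) • (Matrix.diagonal p * U) := by
    apply Matrix.inv_eq_right_inv
    rw [hR, Matrix.mul_smul, smul_mul_assoc, smul_smul,
      show θt⁻¹ * ν * θt = ν by field_simp, ← Matrix.mul_smul]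
    exact hK2
  -- the conjugated matrix
  set M : Matrix (Fin (d+1)) (Fin (d+1)) ℂ := Matrix.of (fun a _ => pt a) with hMdef
  have key : (Matrix.diagonal pt * U.transpose) * Matrix.single (0 : Fin (d+1)) 0 1 *
      (Matrix.diagonal p * U) = ν⁻¹ • M := by
    rw [aux_sandwich]
    ext a b
    simp [Matrix.diagonal_mul, (hU a).1, (hU b).1, hp0, hMdef]
    ring
  have hM : R * e 0 0 * R⁻¹ = M := by
    rw [he, hRinv, hR, smul_mul_assoc, smul_mul_assoc, Matrix.mul_smul, smul_smul, key,
      smul_smul, show θt * (θt⁻¹ * ν) * ν⁻¹ = 1 by field_simp, one_smul]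
  -- brackets with φ reduce to brackets with stdBasisMatrix
  have hbrφ : ∀ (k : Fin (d+1)) (Y : Matrix (Fin (d+1)) (Fin (d+1)) ℂ),
      br (φ k) Y = Matrix.single k k 1 * Y - Y * Matrix.single k k 1 := by
    intro k Y
    rw [hbr, hφ, he, sub_mul, mul_sub, smul_mul_assoc, one_mul, mul_smul_comm, mul_one]
    abel
  have hA : br (φ j) φt0 = Matrix.single j j 1 * M - M * Matrix.single j j 1 := by
    rw [hbrφ, hφt0, hM, mul_sub, sub_mul, mul_smul_comm, mul_one, smul_mul_assoc, one_mul]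
    abel
  have hMij : M i j = pt i := rfl
  have hMji : M j i = pt j := rfl
  have t1 : Matrix.single i i (1:ℂ) * (Matrix.single j j 1 * M) = 0 := by
    rw [← mul_assoc, Matrix.single_mul_single_of_ne (c := (1:ℂ)) (i := i) (j := i) (h := hij), zero_mul]
  have t2 : Matrix.single i i (1:ℂ) * (M * Matrix.single j j 1)
      = pt i • Matrix.single i j 1 := by
    rw [← mul_assoc, aux_std_sandwich, hMij]
  have t3 : Matrix.single j j (1:ℂ) * M * Matrix.single i i 1
      = pt j • Matrix.single j i 1 := by
    rw [aux_std_sandwich, hMji]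
  have t4 : M * Matrix.single j j (1:ℂ) * Matrix.single i i 1 = 0 := by
    rw [mul_assoc, Matrix.single_mul_single_of_ne (c := (1:ℂ)) (i := j) (j := j) (h := Ne.symm hij), mul_zero]
  have hB : br (φ i) (br (φ j) φt0)
      = -(pt i • Matrix.single i j 1) - pt j • Matrix.single j i 1 := by
    rw [hbrφ, hA, mul_sub, sub_mul, t1, t2, t3, t4]
    abel
  have hC : br (φ j) (br (φ i) (br (φ j) φt0))
      = pt i • Matrix.single i j 1 - pt j • Matrix.single j i 1 := by
    rw [hbrφ, hB]
    rw [mul_sub, sub_mul, mul_neg, neg_mul, Matrix.mul_smul, Matrix.mul_smul,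
      Matrix.smul_mul, Matrix.smul_mul]
    rw [Matrix.single_mul_single_of_ne (c := (1:ℂ)) (i := j) (j := j) (h := Ne.symm hij),
      Matrix.single_mul_single_same (c := (1:ℂ)) (i := j) (j := j),
      Matrix.single_mul_single_same (c := (1:ℂ)) (i := i) (j := j),
      Matrix.single_mul_single_of_ne (c := (1:ℂ)) (i := j) (j := i) (h := hij)]
    simp
    abel
  rw [hC, hB, he]
  have h2pt : (2 : ℂ) * pt i ≠ 0 := mul_ne_zero two_ne_zero (hptne i)
  rw [show (pt i • Matrix.single i j (1:ℂ) - pt j • Matrix.single j i 1) -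
      (-(pt i • Matrix.single i j 1) - pt j • Matrix.single j i 1)
      = (2 * pt i) • Matrix.single i j 1 by
    rw [two_mul, add_smul]; abel]
  rw [smul_smul, inv_mul_cancel₀ h2pt, one_smul]
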